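/- arXiv:2307.14292 — 2 statements merged into one kernel-verified Lean document; each statement's English description precedes it below -/
import Mathlib

section
/- Every finite tree T (a connected acyclic finite simple graph) has clique-width at most 3. Moreover, the following stronger statement holds: for every finite tree T, every vertex r of T, and every pair of colors c₁, c₂ ∈ {1,2,3}, the tree T can be constructed by the clique-width operations using only the colors {1,2,3} in such a way that in the resulting colored graph the vertex r has color c₁ and every other vertex has color c₂. -/
/-- The color-controlled join of two vertex-disjoint colored graphs:
disjoint union plus all edges between a vertex of `G₁` colored `i` and a vertex of
`G₂` colored `j` for `(i,j) ∈ S`. -/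
def joinGraph {k : ℕ} {α β : Type*} (G₁ : SimpleGraph α) (G₂ : SimpleGraph β)
    (c₁ : α → Fin k) (c₂ : β → Fin k) (S : Set (Fin k × Fin k)) : SimpleGraph (α ⊕ β) where
  Adj x y :=
    match x, y with
    | Sum.inl a, Sum.inl b => G₁.Adj a b
    | Sum.inr a, Sum.inr b => G₂.Adj a b
    | Sum.inl a, Sum.inr b => (c₁ a, c₂ b) ∈ S
    | Sum.inr b, Sum.inl a => (c₁ a, c₂ b) ∈ S
  symm := by
    constructor
    rintro (a | a) (b | b) h
    · exact G₁.adj_symm h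
    · exact h
    · exact h
    · exact G₂.adj_symm h
  loopless := by
    constructor
    rintro (a | a) h
    · exact G₁.irrefl h
    · exact G₂.irrefl h

/-- Add all edges between vertices colored `i` and vertices colored `j`. -/
def addColorEdges {k : ℕ} {α : Type*} (G : SimpleGraph α) (c : α → Fin k)
    (i j : Fin k) : SimpleGraph α where
  Adj u v := G.Adj u v ∨ (u ≠ v ∧ ((c u = i ∧ c v = j) ∨ (c u = j ∧ c v = i)))
  symm := by
    constructor
    intro u v h
    rcases h with h | ⟨hne, hc⟩
    · exact Or.inl h.symm
    · exact Or.inr ⟨hne.symm, hc.symm.imp And.symm And.symm⟩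
  loopless := by
    constructor
    intro v h
    rcases h with h | ⟨hne, _⟩
    · exact G.irrefl h
    · exact hne rfl

/-- Clique-width expressions with colors in `Fin k`. -/
inductive CWExpr (k : ℕ) : Type
  | single (c : Fin k) : CWExpr k
  | union (t₁ t₂ : CWExpr k) : CWExpr k
  | addEdges (i j : Fin k) (hij : i ≠ j) (t : CWExpr k) : CWExpr k
  | recolor (i j : Fin k) (t : CWExpr k) : CWExpr k

namespace CWExpr

variable {k : ℕ}

/-- The vertex set of the colored graph built by a clique-width expression. -/
def V : CWExpr k → Type
  | single _ => Unit
  | union t₁ t₂ => t₁.V ⊕ t₂.V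
  | addEdges _ _ _ t => t.V
  | recolor _ _ t => t.V

/-- The coloring of the colored graph built by a clique-width expression. -/
def coloring : (t : CWExpr k) → t.V → Fin k
  | single c => fun _ => c
  | union t₁ t₂ => Sum.elim t₁.coloring t₂.coloring
  | addEdges _ _ _ t => t.coloring
  | recolor i j t => fun v => if t.coloring v = i then j else t.coloring v

/-- The graph built by a clique-width expression. -/
def graph : (t : CWExpr k) → SimpleGraph t.V
  | single _ => ⊥
  | union t₁ t₂ => joinGraph t₁.graph t₂.graph t₁.coloring t₂.coloring ∅
  | addEdges i j _ t => addColorEdges t.graph t.coloring i j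
  | recolor _ _ t => t.graph

end CWExpr

/-- `G` has clique-width at most `k`: it is the underlying graph of a colored graph
constructible by the clique-width operations with `k` colors. -/
def HasCliqueWidthLE {V : Type*} (G : SimpleGraph V) (k : ℕ) : Prop :=
  ∃ t : CWExpr k, Nonempty (G ≃g t.graph)

/-- The clique-width of a graph: the least `k` such that `G` is constructible with `k` colors. -/
noncomputable def cliqueWidth {V : Type*} (G : SimpleGraph V) : ℕ :=
  sInf {k | HasCliqueWidthLE G k}


section TreeCW

open SimpleGraph

universe u

variable {W : Type*}

private lemma cw_closed_support {G : SimpleGraph W} {A : Set W}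
    (hA : ∀ ⦃a b⦄, a ∈ A → G.Adj a b → b ∈ A) :
    ∀ {u v : W} (p : G.Walk u v), u ∈ A → ∀ x ∈ p.support, x ∈ A := by
  intro u v p
  induction p with
  | nil =>
    intro hu x hx
    simp only [SimpleGraph.Walk.support_nil, List.mem_singleton] at hx
    exact hx ▸ hu
  | cons h p ih =>
    intro hu x hx
    rw [SimpleGraph.Walk.support_cons] at hx
    rcases List.mem_cons.mp hx with rfl | hx
    · exact hu
    · exact ih (hA hu h) x hx

private lemma cw_reach_induce {G : SimpleGraph W} {A : Set W} :
    ∀ {u v : W} (p : G.Walk u v), (∀ x ∈ p.support, x ∈ A) →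
      ∀ (hu : u ∈ A) (hv : v ∈ A), (G.induce A).Reachable ⟨u, hu⟩ ⟨v, hv⟩ := by
  intro u v p
  induction p with
  | nil => intro _ hu hv; exact SimpleGraph.Reachable.refl _
  | @cons u w v h p ih =>
    intro hp hu hv
    have hw : w ∈ A := hp w (by simp)
    have hadj : (G.induce A).Adj ⟨u, hu⟩ ⟨w, hw⟩ := h
    exact hadj.reachable.trans (ih (fun x hx => hp x (by simp [hx])) hw hv)

private lemma cw_tree_main : ∀ (n : ℕ) (V : Type u) [Fintype V] (T : SimpleGraph V),
    Fintype.card V ≤ n → T.Connected → T.IsAcyclic →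
    ∀ (r : V) (c₁ c₂ : Fin 3), c₁ ≠ c₂ →
      ∃ (t : CWExpr 3) (φ : T ≃g t.graph),
        t.coloring (φ r) = c₁ ∧ ∀ v : V, v ≠ r → t.coloring (φ v) = c₂ := by
  intro n
  induction n with
  | zero =>
    intro V _ T hcard hconn _ r _ _ _
    have := Fintype.card_pos_iff.mpr hconn.nonempty
    omega
  | succ n ih =>
    intro V _ T hcard hconn hac r c₁ c₂ hne
    classical
    by_cases hone : Fintype.card V ≤ 1
    · -- single vertex
      have hsub : Subsingleton V := Fintype.card_le_one_iff_subsingleton.mp hone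
      refine ⟨CWExpr.single c₁, ⟨⟨fun _ => (), fun _ => r, fun x => Subsingleton.elim _ _,
        fun _ => rfl⟩, ?_⟩, rfl, fun v hv => absurd (Subsingleton.elim v r) hv⟩
      intro a b
      constructor
      · intro h; exact absurd h (by simp [CWExpr.graph])
      · intro h; exact absurd (Subsingleton.elim a b) h.ne
    · -- at least two vertices
      push_neg at hone
      obtain ⟨v₀, hv₀⟩ := Fintype.exists_ne_of_one_lt_card hone r
      obtain ⟨p₀⟩ := hconn.preconnected r v₀
      obtain ⟨c, hrc⟩ : ∃ c, T.Adj r c := by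
        cases p₀ with
        | nil => exact absurd rfl hv₀.symm
        | cons h _ => exact ⟨_, h⟩
      set G' := T.deleteEdges {s(r, c)} with hG'
      set A : Set V := {v | G'.Reachable r v} with hA
      have hrA : r ∈ A := SimpleGraph.Reachable.refl r
      have hcA : c ∉ A := by
        have hb := (SimpleGraph.isAcyclic_iff_forall_adj_isBridge.mp hac) hrc
        rw [SimpleGraph.isBridge_iff] at hb
        exact hb
      have hAcl : ∀ ⦃a b⦄, a ∈ A → G'.Adj a b → b ∈ A :=
        fun a b ha h => SimpleGraph.Reachable.trans ha h.reachable
      have hBcl : ∀ ⦃a b⦄, a ∈ Aᶜ → G'.Adj a b → b ∈ Aᶜ :=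
        fun a b ha h hb => ha (SimpleGraph.Reachable.trans hb h.symm.reachable)
      have hcross : ∀ u v, T.Adj u v → u ∈ A → v ∉ A → u = r ∧ v = c := by
        intro u v huv hu hv
        by_cases he : s(u, v) = s(r, c)
        · rcases Sym2.eq_iff.mp he with ⟨rfl, rfl⟩ | ⟨rfl, rfl⟩
          · exact ⟨rfl, rfl⟩
          · exact absurd hu hcA
        · exact absurd (hAcl hu (SimpleGraph.deleteEdges_adj.mpr
            ⟨huv, fun hm => he (Set.mem_singleton_iff.mp hm)⟩)) hv
      have hkey : ∀ {a b : V} (p : T.Walk a b),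
          (G'.Reachable r a ∨ G'.Reachable c a) → (G'.Reachable r b ∨ G'.Reachable c b) := by
        intro a b p
        induction p with
        | nil => exact id
        | @cons a w b h p ih =>
          intro hab
          by_cases he : s(a, w) = s(r, c)
          · rcases Sym2.eq_iff.mp he with ⟨rfl, rfl⟩ | ⟨rfl, rfl⟩
            · exact ih (Or.inr (SimpleGraph.Reachable.refl _))
            · exact ih (Or.inl (SimpleGraph.Reachable.refl _))
          · have hadj : G'.Adj a w := SimpleGraph.deleteEdges_adj.mpr
              ⟨h, fun hm => he (Set.mem_singleton_iff.mp hm)⟩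
            exact ih (hab.imp (·.trans hadj.reachable) (·.trans hadj.reachable))
      have hdi : ∀ v ∈ Aᶜ, G'.Reachable c v := by
        intro v hv
        obtain ⟨p⟩ := hconn.preconnected r v
        exact (hkey p (Or.inl (SimpleGraph.Reachable.refl r))).resolve_left hv
      have hcB : c ∈ Aᶜ := hcA
      -- connectivity of the two parts
      have hleA : G'.induce A ≤ T.induce A := fun {a b} h => T.deleteEdges_le _ h
      have hleB : G'.induce Aᶜ ≤ T.induce Aᶜ := fun {a b} h => T.deleteEdges_le _ h
      have hconnA : (T.induce A).Connected := by
        haveI : Nonempty ↥A := ⟨⟨r, hrA⟩⟩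
        refine ⟨fun u v => ?_⟩
        obtain ⟨p⟩ := (u.2 : G'.Reachable r u.1)
        obtain ⟨q⟩ := (v.2 : G'.Reachable r v.1)
        have h1 := cw_reach_induce p (cw_closed_support hAcl p hrA) hrA u.2
        have h2 := cw_reach_induce q (cw_closed_support hAcl q hrA) hrA v.2
        exact SimpleGraph.Reachable.mono hleA (h1.symm.trans h2)
      have hconnB : (T.induce Aᶜ).Connected := by
        haveI : Nonempty ↥(Aᶜ) := ⟨⟨c, hcB⟩⟩
        refine ⟨fun u v => ?_⟩
        obtain ⟨p⟩ := hdi u.1 u.2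
        obtain ⟨q⟩ := hdi v.1 v.2
        have h1 := cw_reach_induce p (cw_closed_support hBcl p hcB) hcB u.2
        have h2 := cw_reach_induce q (cw_closed_support hBcl q hcB) hcB v.2
        exact SimpleGraph.Reachable.mono hleB (h1.symm.trans h2)
      -- acyclicity of the two parts
      have hacA : (T.induce A).IsAcyclic := by
        intro v p hp
        exact hac (p.map (SimpleGraph.Embedding.induce (G := T) A).toHom)
          ((SimpleGraph.Walk.map_isCycle_iff_of_injective
            (SimpleGraph.Embedding.induce (G := T) A).injective).mpr hp)
      have hacB : (T.induce Aᶜ).IsAcyclic := by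
        intro v p hp
        exact hac (p.map (SimpleGraph.Embedding.induce (G := T) Aᶜ).toHom)
          ((SimpleGraph.Walk.map_isCycle_iff_of_injective
            (SimpleGraph.Embedding.induce (G := T) Aᶜ).injective).mpr hp)
      -- cardinalities
      have hcardA : Fintype.card ↥A ≤ n := by
        have hlt : Fintype.card ↥A < Fintype.card V :=
          Fintype.card_lt_of_injective_of_notMem _ Subtype.val_injective
            (by simpa using hcA)
        omega
      have hcardB : Fintype.card ↥(Aᶜ) ≤ n := by
        have hlt : Fintype.card ↥(Aᶜ) < Fintype.card V :=
          Fintype.card_lt_of_injective_of_notMem _ Subtype.val_injective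
            (by simpa using hrA)
        omega
      -- third color
      obtain ⟨c₃, h31, h32⟩ : ∃ c₃ : Fin 3, c₃ ≠ c₁ ∧ c₃ ≠ c₂ := by
        revert hne; revert c₁ c₂; decide
      -- induction hypotheses
      obtain ⟨tA, φA, hφA1, hφA2⟩ := ih ↥A (T.induce A) hcardA hconnA hacA ⟨r, hrA⟩ c₁ c₂ hne
      obtain ⟨tB, φB, hφB1, hφB2⟩ := ih ↥(Aᶜ) (T.induce Aᶜ) hcardB hconnB hacB ⟨c, hcB⟩ c₃ c₂ h32
      -- color facts
      have hA3 : ∀ a : tA.V, tA.coloring a ≠ c₃ := by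
        intro a
        obtain ⟨x, rfl⟩ := φA.surjective a
        by_cases hx : x = ⟨r, hrA⟩
        · subst hx; rw [hφA1]; exact fun h => h31 h.symm
        · rw [hφA2 x hx]; exact fun h => h32 h.symm
      have hB1 : ∀ b : tB.V, tB.coloring b ≠ c₁ := by
        intro b
        obtain ⟨x, rfl⟩ := φB.surjective b
        by_cases hx : x = ⟨c, hcB⟩
        · subst hx; rw [hφB1]; exact fun h => h31 h
        · rw [hφB2 x hx]; exact fun h => hne h.symm
      have hA1 : ∀ a : tA.V, tA.coloring a = c₁ ↔ a = φA ⟨r, hrA⟩ := by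
        intro a
        obtain ⟨x, rfl⟩ := φA.surjective a
        by_cases hx : x = ⟨r, hrA⟩
        · subst hx; simp [hφA1]
        · rw [hφA2 x hx]
          constructor
          · intro h; exact absurd h.symm hne
          · intro h; exact absurd (φA.injective h) hx
      have hB3 : ∀ b : tB.V, tB.coloring b = c₃ ↔ b = φB ⟨c, hcB⟩ := by
        intro b
        obtain ⟨x, rfl⟩ := φB.surjective b
        by_cases hx : x = ⟨c, hcB⟩
        · subst hx; simp [hφB1]
        · rw [hφB2 x hx]
          constructor
          · intro h; exact absurd h.symm h32
          · intro h; exact absurd (φB.injective h) hx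
      have h13 : c₁ ≠ c₃ := fun h => h31 h.symm
      -- the expression
      refine ⟨CWExpr.recolor c₃ c₂ (CWExpr.addEdges c₁ c₃ h13 (CWExpr.union tA tB)), ?_⟩
      let e : V ≃ (tA.V ⊕ tB.V) :=
        (Equiv.sumCompl (· ∈ A)).symm.trans (Equiv.sumCongr φA.toEquiv φB.toEquiv)
      have heA : ∀ x (hx : x ∈ A), e x = Sum.inl (φA ⟨x, hx⟩) := by
        intro x hx
        simp [e, Equiv.sumCompl, hx]
      have heB : ∀ x (hx : x ∉ A), e x = Sum.inr (φB ⟨x, hx⟩) := by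
        intro x hx
        simp only [e, Equiv.trans_apply, Equiv.sumCompl, Equiv.coe_fn_symm_mk, dif_neg hx,
          Equiv.sumCongr_apply, Sum.map_inr]
        rfl
      have hmap : ∀ a b : V,
          (addColorEdges (joinGraph tA.graph tB.graph tA.coloring tB.coloring ∅)
            (Sum.elim tA.coloring tB.coloring) c₁ c₃).Adj (e a) (e b) ↔ T.Adj a b := by
        intro a b
        by_cases ha : a ∈ A <;> by_cases hb : b ∈ A
        · rw [heA a ha, heA b hb]
          simp only [addColorEdges, joinGraph, Sum.elim_inl]
          constructor
          · rintro (h | ⟨_, ⟨_, h2⟩ | ⟨h1, _⟩⟩)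
            · exact φA.map_adj_iff.mp h
            · exact absurd h2 (hA3 _)
            · exact absurd h1 (hA3 _)
          · intro h; exact Or.inl (φA.map_adj_iff.mpr h)
        · rw [heA a ha, heB b hb]
          simp only [addColorEdges, joinGraph, Sum.elim_inl, Sum.elim_inr,
            Set.mem_empty_iff_false]
          constructor
          · rintro (h | ⟨_, ⟨h1, h2⟩ | ⟨h1, _⟩⟩)
            · exact h.elim
            · have h1' := (hA1 _).mp h1
              have h2' := (hB3 _).mp h2
              have ha' : a = r := congrArg Subtype.val (φA.injective h1')
              have hb' : b = c := congrArg Subtype.val (φB.injective h2')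
              rw [ha', hb']; exact hrc
            · exact absurd h1 (hA3 _)
          · intro h
            obtain ⟨rfl, rfl⟩ := hcross a b h ha hb
            exact Or.inr ⟨by simp, Or.inl ⟨hφA1, hφB1⟩⟩
        · rw [heB a ha, heA b hb]
          simp only [addColorEdges, joinGraph, Sum.elim_inl, Sum.elim_inr,
            Set.mem_empty_iff_false]
          constructor
          · rintro (h | ⟨_, ⟨h1, _⟩ | ⟨h1, h2⟩⟩)
            · exact h.elim
            · exact absurd h1 (hB1 _)
            · have h1' := (hB3 _).mp h1
              have h2' := (hA1 _).mp h2
              have ha' : a = c := congrArg Subtype.val (φB.injective h1')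
              have hb' : b = r := congrArg Subtype.val (φA.injective h2')
              rw [ha', hb']; exact hrc.symm
          · intro h
            obtain ⟨rfl, rfl⟩ := hcross b a h.symm hb ha
            exact Or.inr ⟨by simp, Or.inr ⟨hφB1, hφA1⟩⟩
        · rw [heB a ha, heB b hb]
          simp only [addColorEdges, joinGraph, Sum.elim_inr]
          constructor
          · rintro (h | ⟨_, ⟨h1, _⟩ | ⟨_, h2⟩⟩)
            · exact φB.map_adj_iff.mp h
            · exact absurd h1 (hB1 _)
            · exact absurd h2 (hB1 _)
          · intro h; exact Or.inl (φB.map_adj_iff.mpr h)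
      refine ⟨⟨e, fun {a b} => hmap a b⟩, ?_, ?_⟩
      · show (if Sum.elim tA.coloring tB.coloring (e r) = c₃ then c₂
          else Sum.elim tA.coloring tB.coloring (e r)) = c₁
        rw [heA r hrA]
        simp [hφA1, h13]
      · intro v hv
        show (if Sum.elim tA.coloring tB.coloring (e v) = c₃ then c₂
          else Sum.elim tA.coloring tB.coloring (e v)) = c₂
        by_cases hvA : v ∈ A
        · rw [heA v hvA]
          have : tA.coloring (φA ⟨v, hvA⟩) = c₂ :=
            hφA2 ⟨v, hvA⟩ (fun h => hv (congrArg Subtype.val h))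
          simp only [Sum.elim_inl, this]
          rw [if_neg (fun h => h32 h.symm)]
        · rw [heB v hvA]
          by_cases hvc : v = c
          · subst hvc
            simp only [Sum.elim_inr, hφB1]
            simp
          · have : tB.coloring (φB ⟨v, hvA⟩) = c₂ :=
            hφB2 ⟨v, hvA⟩ (fun h => hvc (congrArg Subtype.val h))
            simp only [Sum.elim_inr, this]
            rw [if_neg (fun h => h32 h.symm)]

end TreeCW

/-- Every finite tree has clique-width at most 3; moreover, for every vertex `r` and
every pair of colors `c₁ c₂ ∈ {1,2,3}`, the tree can be built by the clique-width
operations with 3 colors so that `r` ends up colored `c₁` and every other vertex ends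
up colored `c₂`. -/

theorem tree_cliqueWidth_le_three
    (V : Type*) [Fintype V] (T : SimpleGraph V) (hconn : T.Connected) (hac : T.IsAcyclic) :
    (∃ t : CWExpr 3, Nonempty (T ≃g t.graph)) ∧
      ∀ (r : V) (c₁ c₂ : Fin 3), ∃ (t : CWExpr 3) (φ : T ≃g t.graph),
        t.coloring (φ r) = c₁ ∧ ∀ v : V, v ≠ r → t.coloring (φ v) = c₂ := by
  have main := cw_tree_main (Fintype.card V) V T le_rfl hconn hac
  have second : ∀ (r : V) (c₁ c₂ : Fin 3), ∃ (t : CWExpr 3) (φ : T ≃g t.graph),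
      t.coloring (φ r) = c₁ ∧ ∀ v : V, v ≠ r → t.coloring (φ v) = c₂ := by
    intro r c₁ c₂
    by_cases h : c₁ = c₂
    · subst h
      obtain ⟨t₀, φ₀, h1, h2⟩ := main r 0 1 (by decide)
      refine ⟨CWExpr.recolor 1 c₁ (CWExpr.recolor 0 c₁ t₀), φ₀, ?_, ?_⟩
      · show (if (if t₀.coloring (φ₀ r) = 0 then c₁ else t₀.coloring (φ₀ r)) = 1
            then c₁ else (if t₀.coloring (φ₀ r) = 0 then c₁ else t₀.coloring (φ₀ r))) = c₁
        rw [h1]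
        simp only [if_pos rfl]
        split_ifs <;> rfl
      · intro v hv
        show (if (if t₀.coloring (φ₀ v) = 0 then c₁ else t₀.coloring (φ₀ v)) = 1
            then c₁ else (if t₀.coloring (φ₀ v) = 0 then c₁ else t₀.coloring (φ₀ v))) = c₁
        rw [h2 v hv]
        norm_num
    · exact main r c₁ c₂ h
  refine ⟨?_, second⟩
  obtain ⟨r⟩ := hconn.nonempty
  obtain ⟨t, φ, _, _⟩ := second r 0 0
  exact ⟨t, ⟨φ⟩⟩
end

section
/- Every finite simple graph of NLC-width at most k has clique-width at most 2k; that is, for every finite simple graph G, cw(G) ≤ 2·nlcw(G). -/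
/-- NLC expressions with colors in `Fin k`. -/
inductive NLCExpr (k : ℕ) : Type
  | single (c : Fin k) : NLCExpr k
  | join (S : Set (Fin k × Fin k)) (t₁ t₂ : NLCExpr k) : NLCExpr k
  | recolor (R : Fin k → Fin k) (t : NLCExpr k) : NLCExpr k

namespace NLCExpr

variable {k : ℕ}

/-- The vertex set of the colored graph built by an NLC expression. -/
def V : NLCExpr k → Type
  | single _ => Unit
  | join _ t₁ t₂ => t₁.V ⊕ t₂.V
  | recolor _ t => t.V

/-- The coloring of the colored graph built by an NLC expression. -/
def coloring : (t : NLCExpr k) → t.V → Fin k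
  | single c => fun _ => c
  | join _ t₁ t₂ => Sum.elim t₁.coloring t₂.coloring
  | recolor R t => fun v => R (t.coloring v)

/-- The graph built by an NLC expression. -/
def graph : (t : NLCExpr k) → SimpleGraph t.V
  | single _ => ⊥
  | join S t₁ t₂ => joinGraph t₁.graph t₂.graph t₁.coloring t₂.coloring S
  | recolor _ t => t.graph

end NLCExpr


/-- `G` has NLC-width at most `k`: it is the underlying graph of a member of `NLC_k`. -/
def HasNLCWidthLE {V : Type*} (G : SimpleGraph V) (k : ℕ) : Prop :=
  ∃ t : NLCExpr k, Nonempty (G ≃g t.graph)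

/-- The NLC-width of a graph. -/
noncomputable def nlcWidth {V : Type*} (G : SimpleGraph V) : ℕ :=
  sInf {k | HasNLCWidthLE G k}

namespace CWAux

variable {m k : ℕ}

def step (x : Fin m) (p : Fin m × Fin m) : Fin m := if x = p.1 then p.2 else x

def recolorList : List (Fin m × Fin m) → CWExpr m → CWExpr m
  | [], s => s
  | p :: l, s => recolorList l (CWExpr.recolor p.1 p.2 s)

lemma recolorList_spec (l : List (Fin m × Fin m)) (s : CWExpr m) :
    ∃ e : s.V ≃ (recolorList l s).V,
      (∀ u v, (recolorList l s).graph.Adj (e u) (e v) ↔ s.graph.Adj u v) ∧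
      (∀ v, (recolorList l s).coloring (e v) = l.foldl step (s.coloring v)) := by
  induction l generalizing s with
  | nil => exact ⟨Equiv.refl _, fun u v => Iff.rfl, fun v => rfl⟩
  | cons p l ih =>
    obtain ⟨e, hadj, hcol⟩ := ih (CWExpr.recolor p.1 p.2 s)
    refine ⟨e, hadj, fun v => ?_⟩
    show (recolorList l (CWExpr.recolor p.1 p.2 s)).coloring (e v) = _
    rw [hcol v]; rfl

def addEdgesList : List {p : Fin m × Fin m // p.1 ≠ p.2} → CWExpr m → CWExpr m
  | [], s => s
  | p :: l, s => CWExpr.addEdges p.1.1 p.1.2 p.2 (addEdgesList l s)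

lemma addEdgesList_spec (l : List {p : Fin m × Fin m // p.1 ≠ p.2}) (s : CWExpr m) :
    ∃ e : s.V ≃ (addEdgesList l s).V,
      (∀ v, (addEdgesList l s).coloring (e v) = s.coloring v) ∧
      (∀ u v, (addEdgesList l s).graph.Adj (e u) (e v) ↔
        s.graph.Adj u v ∨ (u ≠ v ∧ ∃ p ∈ l,
          (s.coloring u = p.1.1 ∧ s.coloring v = p.1.2) ∨
          (s.coloring u = p.1.2 ∧ s.coloring v = p.1.1))) := by
  induction l with
  | nil =>
    refine ⟨Equiv.refl _, fun v => rfl, fun u v => ?_⟩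
    simp [addEdgesList]
    exact Iff.rfl
  | cons q l ih =>
    obtain ⟨e, hcol, hadj⟩ := ih
    refine ⟨e, hcol, fun u v => ?_⟩
    have hne : (e u ≠ e v) ↔ (u ≠ v) := (Equiv.injective e).ne_iff
    show (addEdgesList l s).graph.Adj (e u) (e v) ∨
        ((e u ≠ e v) ∧ (((addEdgesList l s).coloring (e u) = q.1.1 ∧
          (addEdgesList l s).coloring (e v) = q.1.2) ∨
          ((addEdgesList l s).coloring (e u) = q.1.2 ∧
          (addEdgesList l s).coloring (e v) = q.1.1))) ↔ _
    rw [hadj u v, hcol u, hcol v, hne]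
    simp only [List.mem_cons]
    constructor
    · rintro ((h | ⟨h1, p, hp, h2⟩) | ⟨h1, h2⟩)
      · exact Or.inl h
      · exact Or.inr ⟨h1, p, Or.inr hp, h2⟩
      · exact Or.inr ⟨h1, q, Or.inl rfl, h2⟩
    · rintro (h | ⟨h1, p, (rfl | hp), h2⟩)
      · exact Or.inl (Or.inl h)
      · exact Or.inr ⟨h1, h2⟩
      · exact Or.inl (Or.inr ⟨h1, p, hp, h2⟩)

end CWAux
namespace CWAux

variable {k : ℕ}

lemma lo_ne_hi (i j : Fin k) : Fin.castAdd k i ≠ Fin.natAdd k j := by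
  intro h
  have h2 := congrArg Fin.val h
  have h3 := i.isLt
  simp [Fin.coe_castAdd, Fin.coe_natAdd] at h2
  omega

lemma lo_inj {i j : Fin k} : Fin.castAdd k i = Fin.castAdd k j ↔ i = j := by
  simp [Fin.ext_iff]

lemma hi_inj {i j : Fin k} : Fin.natAdd k i = Fin.natAdd k j ↔ i = j := by
  simp [Fin.ext_iff]

lemma foldl_hi_fixed (R : Fin k → Fin k) (l : List (Fin k)) (d : Fin k) :
    ((l.map fun i => (Fin.castAdd k i, Fin.natAdd k (R i))).foldl step (Fin.natAdd k d))
      = Fin.natAdd k d := by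
  induction l with
  | nil => rfl
  | cons a l ih =>
    simp only [List.map_cons, List.foldl_cons, step]
    rw [if_neg (Ne.symm (lo_ne_hi a d))]
    exact ih

lemma foldl_lo (R : Fin k → Fin k) (l : List (Fin k)) (c : Fin k) :
    ((l.map fun i => (Fin.castAdd k i, Fin.natAdd k (R i))).foldl step (Fin.castAdd k c))
      = if c ∈ l then Fin.natAdd k (R c) else Fin.castAdd k c := by
  induction l with
  | nil => rfl
  | cons a l ih =>
    simp only [List.map_cons, List.foldl_cons, step, List.mem_cons]
    by_cases h : c = a
    · subst h
      rw [if_pos rfl, if_pos (Or.inl rfl)]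
      exact foldl_hi_fixed R l (R c)
    · rw [if_neg (fun hh => h (lo_inj.mp hh)), ih]
      simp [h]

lemma foldl_lo_fixed (l : List (Fin k)) (d : Fin k) :
    ((l.map fun i => (Fin.natAdd k i, Fin.castAdd k i)).foldl step (Fin.castAdd k d))
      = Fin.castAdd k d := by
  induction l with
  | nil => rfl
  | cons a l ih =>
    simp only [List.map_cons, List.foldl_cons, step]
    rw [if_neg (lo_ne_hi d a)]
    exact ih

lemma foldl_hi (l : List (Fin k)) (c : Fin k) :
    ((l.map fun i => (Fin.natAdd k i, Fin.castAdd k i)).foldl step (Fin.natAdd k c))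
      = if c ∈ l then Fin.castAdd k c else Fin.natAdd k c := by
  induction l with
  | nil => rfl
  | cons a l ih =>
    simp only [List.map_cons, List.foldl_cons, step, List.mem_cons]
    by_cases h : c = a
    · subst h
      rw [if_pos rfl, if_pos (Or.inl rfl)]
      exact foldl_lo_fixed l c
    · rw [if_neg (fun hh => h (hi_inj.mp hh)), ih]
      simp [h]

open Classical in
noncomputable def joinPairs (k : ℕ) (S : Set (Fin k × Fin k)) :
    List {p : Fin (k + k) × Fin (k + k) // p.1 ≠ p.2} :=
  (List.finRange k).flatMap fun i => (List.finRange k).filterMap fun j =>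
    if (i, j) ∈ S then some ⟨(Fin.castAdd k i, Fin.natAdd k j), lo_ne_hi i j⟩ else none

lemma mem_joinPairs {S : Set (Fin k × Fin k)}
    {p : {p : Fin (k + k) × Fin (k + k) // p.1 ≠ p.2}} :
    p ∈ joinPairs k S ↔ ∃ i j, (i, j) ∈ S ∧
      p.1.1 = Fin.castAdd k i ∧ p.1.2 = Fin.natAdd k j := by
  classical
  simp only [joinPairs, List.mem_flatMap, List.mem_filterMap, List.mem_finRange, true_and]
  constructor
  · rintro ⟨i, j, hj⟩
    split at hj
    · cases Option.some.inj hj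
      exact ⟨i, j, by assumption, rfl, rfl⟩
    · simp at hj
  · rintro ⟨i, j, hS, h1, h2⟩
    refine ⟨i, j, ?_⟩
    have : p = ⟨(Fin.castAdd k i, Fin.natAdd k j), lo_ne_hi i j⟩ := by
      ext : 1
      exact Prod.ext h1 h2
    simp [hS, this]

end CWAux

namespace CWAux

lemma foldl_lo_id {k : ℕ} (l : List (Fin k)) (c : Fin k) :
    ((l.map fun i => (Fin.castAdd k i, Fin.natAdd k i)).foldl step (Fin.castAdd k c))
      = if c ∈ l then Fin.natAdd k c else Fin.castAdd k c := by
  simpa using foldl_lo (fun i => i) l c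

end CWAux
namespace CWAux

lemma join_case {k : ℕ} (S : Set (Fin k × Fin k)) (t₁ t₂ : NLCExpr k)
    (s₁ s₂' : CWExpr (k + k)) (e₁ : t₁.V ≃ s₁.V) (eU : t₂.V ≃ s₂'.V)
    (hadj₁ : ∀ u v, s₁.graph.Adj (e₁ u) (e₁ v) ↔ t₁.graph.Adj u v)
    (hcol₁ : ∀ v, s₁.coloring (e₁ v) = Fin.castAdd k (t₁.coloring v))
    (hadjU : ∀ u v, s₂'.graph.Adj (eU u) (eU v) ↔ t₂.graph.Adj u v)
    (hcolU : ∀ v, s₂'.coloring (eU v) = Fin.natAdd k (t₂.coloring v)) :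
    ∃ s : CWExpr (k + k), ∃ e : (NLCExpr.join S t₁ t₂).V ≃ s.V,
      (∀ u v, s.graph.Adj (e u) (e v) ↔ (NLCExpr.join S t₁ t₂).graph.Adj u v) ∧
      (∀ v, s.coloring (e v) = Fin.castAdd k ((NLCExpr.join S t₁ t₂).coloring v)) := by
  obtain ⟨eA, hAcol, hAadj⟩ := addEdgesList_spec (joinPairs k S) (CWExpr.union s₁ s₂')
  obtain ⟨eD, hDadj, hDcol⟩ := recolorList_spec
    ((List.finRange k).map fun i => (Fin.natAdd k i, Fin.castAdd k i))
    (addEdgesList (joinPairs k S) (CWExpr.union s₁ s₂'))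
  have hc1 : ∀ a : t₁.V, (CWExpr.union s₁ s₂').coloring (Sum.inl (e₁ a))
      = Fin.castAdd k (t₁.coloring a) := fun a => hcol₁ a
  have hc2 : ∀ b : t₂.V, (CWExpr.union s₁ s₂').coloring (Sum.inr (eU b))
      = Fin.natAdd k (t₂.coloring b) := fun b => hcolU b
  have ha11 : ∀ a b : t₁.V, (CWExpr.union s₁ s₂').graph.Adj (Sum.inl (e₁ a)) (Sum.inl (e₁ b)) ↔
      t₁.graph.Adj a b := fun a b => hadj₁ a b
  have ha22 : ∀ a b : t₂.V, (CWExpr.union s₁ s₂').graph.Adj (Sum.inr (eU a)) (Sum.inr (eU b)) ↔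
      t₂.graph.Adj a b := fun a b => hadjU a b
  have ha12 : ∀ (a : s₁.V) (b : s₂'.V), ¬ (CWExpr.union s₁ s₂').graph.Adj (Sum.inl a) (Sum.inr b) :=
    fun a b h => Set.notMem_empty _ h
  have ha21 : ∀ (a : s₂'.V) (b : s₁.V), ¬ (CWExpr.union s₁ s₂').graph.Adj (Sum.inr a) (Sum.inl b) :=
    fun a b h => Set.notMem_empty _ h
  refine ⟨_, (Equiv.sumCongr e₁ eU).trans (eA.trans eD), fun u v => ?_, fun v => ?_⟩
  · rcases u with u | u <;> rcases v with v | v <;>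
      refine ((hDadj _ _).trans (hAadj _ _)).trans ?_ <;>
      simp only [Equiv.sumCongr_apply, Sum.map_inl, Sum.map_inr]
    · -- inl, inl
      show _ ↔ t₁.graph.Adj u v
      constructor
      · rintro (h | ⟨-, p, hp, ⟨hx, hy⟩ | ⟨hx, hy⟩⟩)
        · exact (ha11 u v).mp h
        · obtain ⟨i, j, -, h1, h2⟩ := mem_joinPairs.mp hp
          rw [hc1, h2] at hy
          exact absurd hy (lo_ne_hi _ _)
        · obtain ⟨i, j, -, h1, h2⟩ := mem_joinPairs.mp hp
          rw [hc1, h2] at hx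
          exact absurd hx (lo_ne_hi _ _)
      · intro h
        exact Or.inl ((ha11 u v).mpr h)
    · -- inl, inr
      show _ ↔ (t₁.coloring u, t₂.coloring v) ∈ S
      constructor
      · rintro (h | ⟨-, p, hp, ⟨hx, hy⟩ | ⟨hx, hy⟩⟩)
        · exact absurd h (ha12 _ _)
        · obtain ⟨i, j, hS, h1, h2⟩ := mem_joinPairs.mp hp
          rw [hc1, h1] at hx
          rw [hc2, h2] at hy
          rw [lo_inj.mp hx, hi_inj.mp hy]
          exact hS
        · obtain ⟨i, j, hS, h1, h2⟩ := mem_joinPairs.mp hp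
          rw [hc1, h2] at hx
          exact absurd hx (lo_ne_hi _ _)
      · intro h
        refine Or.inr ⟨Sum.inl_ne_inr, ⟨(Fin.castAdd k (t₁.coloring u),
          Fin.natAdd k (t₂.coloring v)), lo_ne_hi _ _⟩,
          mem_joinPairs.mpr ⟨_, _, h, rfl, rfl⟩, Or.inl ⟨hc1 u, hc2 v⟩⟩
    · -- inr, inl
      show _ ↔ (t₁.coloring v, t₂.coloring u) ∈ S
      constructor
      · rintro (h | ⟨-, p, hp, ⟨hx, hy⟩ | ⟨hx, hy⟩⟩)
        · exact absurd h (ha21 _ _)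
        · obtain ⟨i, j, hS, h1, h2⟩ := mem_joinPairs.mp hp
          rw [hc2, h1] at hx
          exact absurd hx.symm (lo_ne_hi _ _)
        · obtain ⟨i, j, hS, h1, h2⟩ := mem_joinPairs.mp hp
          rw [hc2, h2] at hx
          rw [hc1, h1] at hy
          rw [lo_inj.mp hy, hi_inj.mp hx]
          exact hS
      · intro h
        refine Or.inr ⟨Sum.inr_ne_inl, ⟨(Fin.castAdd k (t₁.coloring v),
          Fin.natAdd k (t₂.coloring u)), lo_ne_hi _ _⟩,
          mem_joinPairs.mpr ⟨_, _, h, rfl, rfl⟩, Or.inr ⟨hc2 u, hc1 v⟩⟩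
    · -- inr, inr
      show _ ↔ t₂.graph.Adj u v
      constructor
      · rintro (h | ⟨-, p, hp, ⟨hx, hy⟩ | ⟨hx, hy⟩⟩)
        · exact (ha22 u v).mp h
        · obtain ⟨i, j, -, h1, h2⟩ := mem_joinPairs.mp hp
          rw [hc2, h1] at hx
          exact absurd hx.symm (lo_ne_hi _ _)
        · obtain ⟨i, j, -, h1, h2⟩ := mem_joinPairs.mp hp
          rw [hc2, h1] at hy
          exact absurd hy.symm (lo_ne_hi _ _)
      · intro h
        exact Or.inl ((ha22 u v).mpr h)
  · rcases v with v | v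
    · have h := hDcol (eA (Sum.inl (e₁ v)))
      erw [hAcol, hc1 v, foldl_lo_fixed] at h
      exact h
    · have h := hDcol (eA (Sum.inr (eU v)))
      erw [hAcol, hc2 v, foldl_hi, if_pos (List.mem_finRange _)] at h
      exact h

lemma nlc_to_cw {k : ℕ} (t : NLCExpr k) :
    ∃ s : CWExpr (k + k), ∃ e : t.V ≃ s.V,
      (∀ u v, s.graph.Adj (e u) (e v) ↔ t.graph.Adj u v) ∧
      (∀ v, s.coloring (e v) = Fin.castAdd k (t.coloring v)) := by
  induction t with
  | single c =>
    exact ⟨CWExpr.single (Fin.castAdd k c), Equiv.refl _, fun u v => Iff.rfl, fun v => rfl⟩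
  | recolor R t ih =>
    obtain ⟨s, e, hadj, hcol⟩ := ih
    obtain ⟨e2, hadj2, hcol2⟩ := recolorList_spec
      (((List.finRange k).map fun i => (Fin.castAdd k i, Fin.natAdd k (R i))) ++
       ((List.finRange k).map fun i => (Fin.natAdd k i, Fin.castAdd k i))) s
    refine ⟨_, e.trans e2, fun u v => ?_, fun v => ?_⟩
    · exact (hadj2 (e u) (e v)).trans (hadj u v)
    · have h := hcol2 (e v)
      rw [hcol v, List.foldl_append, foldl_lo, if_pos (List.mem_finRange _),
        foldl_hi, if_pos (List.mem_finRange _)] at h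
      exact h
  | join S t₁ t₂ ih₁ ih₂ =>
    obtain ⟨s₁, e₁, hadj₁, hcol₁⟩ := ih₁
    obtain ⟨s₂, e₂, hadj₂, hcol₂⟩ := ih₂
    obtain ⟨eU, hUadj, hUcol⟩ := recolorList_spec
      ((List.finRange k).map fun i => (Fin.castAdd k i, Fin.natAdd k i)) s₂
    refine join_case S t₁ t₂ s₁ _ e₁ (e₂.trans eU) hadj₁ hcol₁
      (fun u v => (hUadj (e₂ u) (e₂ v)).trans (hadj₂ u v)) (fun v => ?_)
    have h := hUcol (e₂ v)
    rw [hcol₂ v, foldl_lo_id, if_pos (List.mem_finRange _)] at h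
    exact h

end CWAux
namespace CWAux

lemma nlc_nonempty_V {k : ℕ} (t : NLCExpr k) : Nonempty t.V := by
  induction t with
  | single c => exact ⟨()⟩
  | join S t₁ t₂ ih₁ ih₂ => exact ⟨Sum.inl ih₁.some⟩
  | recolor R t ih => exact ih

lemma cw_nonempty_V {k : ℕ} (t : CWExpr k) : Nonempty t.V := by
  induction t with
  | single c => exact ⟨()⟩
  | union t₁ t₂ ih₁ ih₂ => exact ⟨Sum.inl ih₁.some⟩
  | addEdges i j h t ih => exact ih
  | recolor i j t ih => exact ih

lemma exists_nlc_aux {k : ℕ} : ∀ (n : ℕ) {α : Type*} [Fintype α],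
    Fintype.card α = n + 1 → ∀ (G : SimpleGraph α) (c : α → Fin k),
    Function.Injective c →
    ∃ t : NLCExpr k, ∃ e : α ≃ t.V,
      (∀ u v, t.graph.Adj (e u) (e v) ↔ G.Adj u v) ∧
      (∀ v, t.coloring (e v) = c v) := by
  intro n
  induction n with
  | zero =>
    intro α _ hcard G c hc
    have : Nonempty α := Fintype.card_pos_iff.mp (by omega)
    obtain ⟨a⟩ := this
    have huniq : ∀ x : α, x = a := by
      intro x
      have := Fintype.card_le_one_iff.mp (le_of_eq hcard)
      exact this x a
    refine ⟨NLCExpr.single (c a), ⟨fun _ => (), fun _ => a, fun x => (huniq x).symm,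
      fun _ => rfl⟩, fun u v => ?_, fun v => ?_⟩
    · simp only [NLCExpr.graph, SimpleGraph.bot_adj, false_iff]
      rw [huniq u, huniq v]
      exact fun h => G.irrefl h
    · show c a = c v
      rw [huniq v]
  | succ n ih =>
    intro α _ hcard G c hc
    classical
    have : Nonempty α := Fintype.card_pos_iff.mp (by omega)
    obtain ⟨a⟩ := this
    have hcard' : Fintype.card {x : α // ¬ x = a} = n + 1 := by
      have := Fintype.card_subtype_compl (p := fun x : α => x = a)
      rw [this, Fintype.card_subtype_eq, hcard]
      omega
    obtain ⟨t', e', hadj', hcol'⟩ := ih hcard' (G.comap (Subtype.val))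
      (fun x => c x.val) (fun x y h => Subtype.ext (hc h))
    set S : Set (Fin k × Fin k) :=
      {p | p.1 = c a ∧ ∃ x : {x : α // ¬ x = a}, c x.val = p.2 ∧ G.Adj a x.val} with hS
    obtain ⟨E, hEpos, hEneg⟩ : ∃ E : α ≃ (NLCExpr.join S (NLCExpr.single (c a)) t').V, E a = Sum.inl () ∧
        ∀ (u : α) (h : ¬ u = a), E u = Sum.inr (e' ⟨u, h⟩) := by
      refine ⟨(Equiv.sumCompl (fun x : α => x = a)).symm.trans (Equiv.sumCongr
        ⟨fun _ => (), fun _ => ⟨a, rfl⟩, fun x => Subtype.ext x.2.symm, fun _ => rfl⟩ e'),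
        ?_, ?_⟩
      · show Sum.map _ e' ((Equiv.sumCompl (fun x : α => x = a)).symm a) = _
        rw [Equiv.sumCompl_symm_apply_of_pos (p := fun x : α => x = a) (a := a) rfl]
        rfl
      · intro u h
        show Sum.map _ e' ((Equiv.sumCompl (fun x : α => x = a)).symm u) = _
        rw [Equiv.sumCompl_symm_apply_of_neg (p := fun x : α => x = a) (a := u) h]
        rfl
    refine ⟨NLCExpr.join S (NLCExpr.single (c a)) t', E, fun u v => ?_, fun v => ?_⟩
    · by_cases hu : u = a <;> by_cases hv : v = a
      · rw [hu, hv, hEpos]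
        refine iff_of_false (fun h => ?_) (fun h => G.irrefl h)
        exact h.elim
      · rw [hu, hEpos, hEneg v hv]
        show ((c a, t'.coloring (e' ⟨v, hv⟩)) ∈ S) ↔ G.Adj a v
        rw [hcol' ⟨v, hv⟩]
        constructor
        · rintro ⟨-, x, hx, hadj⟩
          rwa [show x.val = v from hc hx] at hadj
        · intro h
          exact ⟨rfl, ⟨v, hv⟩, rfl, h⟩
      · rw [hv, hEneg u hu, hEpos]
        show ((c a, t'.coloring (e' ⟨u, hu⟩)) ∈ S) ↔ G.Adj u a
        rw [hcol' ⟨u, hu⟩]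
        constructor
        · rintro ⟨-, x, hx, hadj⟩
          have hxv : x.val = u := hc hx
          rw [hxv] at hadj
          exact hadj.symm
        · intro h
          exact ⟨rfl, ⟨u, hu⟩, rfl, h.symm⟩
      · rw [hEneg u hu, hEneg v hv]
        show t'.graph.Adj (e' ⟨u, hu⟩) (e' ⟨v, hv⟩) ↔ G.Adj u v
        rw [hadj']
        exact Iff.rfl
    · by_cases hv : v = a
      · rw [hv, hEpos]
        rfl
      · rw [hEneg v hv]
        exact hcol' ⟨v, hv⟩

end CWAux

/-- Every finite simple graph of NLC-width at most `k` has clique-width at most `2k`: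
`cw(G) ≤ 2 · nlcw(G)`. -/
theorem cliqueWidth_le_two_mul_nlcWidth (V : Type*) [Fintype V] (G : SimpleGraph V) :
    cliqueWidth G ≤ 2 * nlcWidth G := by
  by_cases hne : Nonempty V
  · -- V nonempty: the NLC-width is attained
    have hmem : HasNLCWidthLE G (Fintype.card V) := by
      have hpos : 0 < Fintype.card V := Fintype.card_pos_iff.mpr hne
      obtain ⟨t, e, hadj, hcol⟩ := CWAux.exists_nlc_aux (Fintype.card V - 1)
        (by omega) G (fun v => Fintype.equivFin V v)
        (fun x y h => (Fintype.equivFin V).injective h)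
      exact ⟨t, ⟨⟨e, fun {a b} => hadj a b⟩⟩⟩
    have hNE : {k | HasNLCWidthLE G k}.Nonempty := ⟨_, hmem⟩
    have h2 : HasNLCWidthLE G (nlcWidth G) := Nat.sInf_mem hNE
    obtain ⟨t, ⟨φ⟩⟩ := h2
    obtain ⟨s, e, hadj, hcol⟩ := CWAux.nlc_to_cw t
    have hcw : HasCliqueWidthLE G (2 * nlcWidth G) := by
      rw [two_mul]
      exact ⟨s, ⟨φ.trans ⟨e, fun {a b} => hadj a b⟩⟩⟩
    exact Nat.sInf_le hcw
  · -- V empty: both widths are 0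
    have hN : {k | HasNLCWidthLE G k} = ∅ := by
      ext k
      simp only [Set.mem_setOf_eq, Set.mem_empty_iff_false, iff_false]
      rintro ⟨t, ⟨φ⟩⟩
      exact hne ⟨φ.toEquiv.symm (CWAux.nlc_nonempty_V t).some⟩
    have hC : {k | HasCliqueWidthLE G k} = ∅ := by
      ext k
      simp only [Set.mem_setOf_eq, Set.mem_empty_iff_false, iff_false]
      rintro ⟨t, ⟨φ⟩⟩
      exact hne ⟨φ.toEquiv.symm (CWAux.cw_nonempty_V t).some⟩
    show sInf {k | HasCliqueWidthLE G k} ≤ 2 * sInf {k | HasNLCWidthLE G k}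
    rw [hN, hC, Nat.sInf_empty]
end
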